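/- Let q ∈ ℕ be even, r ∈ ℝ∖ℕ₀ with qr ∈ ℕ, c > 0, and A_k as in the expansion of (c+x^q)^r. Then for k ≥ q⌈r⌉, A_k(x) = (−1)^k ∑_{i=⌈r⌉}^{⌊k/q⌋} C(r,i) C(qr−qi, k−qi) c^i x^{k−qi}, and A_k has degree exactly k − q⌈r⌉ with nonzero leading coefficient (−1)^k C(r, ⌈r⌉) C(qr − q⌈r⌉, k − q⌈r⌉) c^{⌈r⌉}. Hence (A_k : k ≥ q⌈r⌉) is a basis of the space of real polynomials. -/

import Mathlib

/-- The generalized binomial coefficient `C(u, j) = u(u-1)⋯(u-j+1)/j!`. -/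
noncomputable def genBinom (u : ℝ) (j : ℕ) : ℝ :=
  (∏ m ∈ Finset.range j, (u - m)) / (j.factorial : ℝ)

/-- The polynomial `A_k(x) = ∑_{j=0}^{⌊k/q⌋} (-1)^k C(r,j) C(q(r-j), k-qj) c^j x^{k-qj}`. -/
noncomputable def Apoly (q : ℕ) (r c : ℝ) (k : ℕ) : Polynomial ℝ :=
  ∑ j ∈ Finset.range (k / q + 1),
    Polynomial.C ((-1 : ℝ) ^ k * genBinom r j *
        genBinom ((q : ℝ) * (r - j)) (k - q * j) * c ^ j) *
      Polynomial.X ^ (k - q * j)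

lemma genBinom_ne_zero {u : ℝ} {j : ℕ} (h : ∀ t : ℕ, t < j → u ≠ t) : genBinom u j ≠ 0 := by
  unfold genBinom
  apply div_ne_zero
  · exact Finset.prod_ne_zero_iff.2 fun t ht => sub_ne_zero.2 (h t (Finset.mem_range.1 ht))
  · exact_mod_cast (Nat.factorial_pos j).ne'

lemma genBinom_nat_eq_zero {n j : ℕ} (h : n < j) : genBinom (n : ℝ) j = 0 := by
  unfold genBinom
  rw [Finset.prod_eq_zero (Finset.mem_range.2 h) (by simp)]
  simp

lemma aux_li (p : ℕ → Polynomial ℝ) (hp : ∀ n, (p n).degree = n) :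
    LinearIndependent ℝ p := by
  rw [linearIndependent_iff']
  intro s
  induction s using Finset.induction_on_max with
  | empty => intro g _ i hi; exact absurd hi (Finset.notMem_empty i)
  | insert a t hta ih =>
    intro g hsum i hi
    have hat : a ∉ t := fun h => lt_irrefl a (hta a h)
    have hga : g a = 0 := by
      by_contra hga
      have hrest : (∑ j ∈ t, g j • p j).degree < (a : WithBot ℕ) := by
        refine lt_of_le_of_lt (Polynomial.degree_sum_le _ _) ?_
        refine (Finset.sup_lt_iff (WithBot.bot_lt_coe a)).2 fun j hj => ?_
        refine lt_of_le_of_lt (Polynomial.degree_smul_le _ _) ?_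
        rw [hp j]
        exact Nat.cast_lt.2 (hta j hj)
      have hda : (g a • p a).degree = (a : WithBot ℕ) := by
        rw [Polynomial.smul_eq_C_mul, Polynomial.degree_C_mul hga, hp a]
      have htot : (∑ j ∈ insert a t, g j • p j).degree = (a : WithBot ℕ) := by
        rw [Finset.sum_insert hat, Polynomial.degree_add_eq_left_of_degree_lt (by rw [hda]; exact hrest), hda]
      rw [hsum] at htot
      simp [Polynomial.degree_zero] at htot
    rcases Finset.mem_insert.1 hi with rfl | hit
    · exact hga
    · apply ih g _ i hit
      rw [Finset.sum_insert hat, hga, zero_smul, zero_add] at hsum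
      exact hsum

lemma aux_span (p : ℕ → Polynomial ℝ) (hp : ∀ n, (p n).degree = n) :
    Submodule.span ℝ (Set.range p) = ⊤ := by
  have key : ∀ n : ℕ, ∀ f : Polynomial ℝ, f.natDegree ≤ n →
      f ∈ Submodule.span ℝ (Set.range p) := by
    intro n
    induction n using Nat.strong_induction_on with
    | _ n ih =>
      intro f hf
      by_cases hf0 : f = 0
      · simp [hf0]
      · set d := f.natDegree with hd
        have hpd0 : p d ≠ 0 := fun h => by
          have := hp d; rw [h, Polynomial.degree_zero] at this; exact absurd this (by simp)
        have hl : (p d).leadingCoeff ≠ 0 := Polynomial.leadingCoeff_ne_zero.2 hpd0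
        have hfl : f.leadingCoeff ≠ 0 := Polynomial.leadingCoeff_ne_zero.2 hf0
        set s : ℝ := f.leadingCoeff / (p d).leadingCoeff with hs
        have hs0 : s ≠ 0 := div_ne_zero hfl hl
        set q : Polynomial ℝ := s • p d with hq
        have hqmem : q ∈ Submodule.span ℝ (Set.range p) :=
          Submodule.smul_mem _ _ (Submodule.subset_span ⟨d, rfl⟩)
        have hdegq : q.degree = (d : WithBot ℕ) := by
          rw [hq, Polynomial.smul_eq_C_mul, Polynomial.degree_C_mul hs0, hp d]
        have hdegf : f.degree = (d : WithBot ℕ) := Polynomial.degree_eq_natDegree hf0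
        have hlcq : f.leadingCoeff = q.leadingCoeff := by
          rw [hq, Polynomial.smul_eq_C_mul, Polynomial.leadingCoeff_mul,
            Polynomial.leadingCoeff_C, hs]
          field_simp
        have hsub : (f - q).degree < f.degree :=
          Polynomial.degree_sub_lt (hdegf.trans hdegq.symm) hf0 hlcq
        by_cases hg0 : f - q = 0
        · have : f = q := by rw [sub_eq_zero] at hg0; exact hg0
          rw [this]; exact hqmem
        · have hlt : (f - q).natDegree < d :=
            Polynomial.natDegree_lt_natDegree hg0 hsub
          have : f = (f - q) + q := by ring
          rw [this]
          exact Submodule.add_mem _ (ih (f - q).natDegree (lt_of_lt_of_le hlt hf) _ le_rfl) hqmem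
  rw [eq_top_iff]
  intro f _
  exact key f.natDegree f le_rfl

theorem Apoly_basis_integer_qr
    (q : ℕ) (hq : Even q) (hq0 : 0 < q) (r : ℝ) (hr : ∀ n : ℕ, r ≠ n)
    (hqr : ∃ m : ℕ, 0 < m ∧ (q : ℝ) * r = m) (c : ℝ) (hc : 0 < c) :
    (∀ k : ℕ, q * ⌈r⌉₊ ≤ k →
        Apoly q r c k =
          ∑ i ∈ Finset.Icc ⌈r⌉₊ (k / q),
            Polynomial.C ((-1 : ℝ) ^ k * genBinom r i *
                genBinom ((q : ℝ) * r - q * i) (k - q * i) * c ^ i) *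
              Polynomial.X ^ (k - q * i) ∧
        (Apoly q r c k).degree = ((k - q * ⌈r⌉₊ : ℕ) : WithBot ℕ) ∧
        (Apoly q r c k).leadingCoeff =
          (-1 : ℝ) ^ k * genBinom r ⌈r⌉₊ *
            genBinom ((q : ℝ) * r - q * ⌈r⌉₊) (k - q * ⌈r⌉₊) * c ^ ⌈r⌉₊ ∧
        (-1 : ℝ) ^ k * genBinom r ⌈r⌉₊ *
            genBinom ((q : ℝ) * r - q * ⌈r⌉₊) (k - q * ⌈r⌉₊) * c ^ ⌈r⌉₊ ≠ 0) ∧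
      LinearIndependent ℝ (fun n : ℕ => Apoly q r c (n + q * ⌈r⌉₊)) ∧
      Submodule.span ℝ (Set.range fun n : ℕ => Apoly q r c (n + q * ⌈r⌉₊)) = ⊤ := by
  obtain ⟨m, hm0, hm⟩ := hqr
  have hrR : r < (⌈r⌉₊ : ℝ) := lt_of_le_of_ne (Nat.le_ceil r) (hr ⌈r⌉₊)
  have hmqR : m < q * ⌈r⌉₊ := by
    have h1 : (m : ℝ) < ((q * ⌈r⌉₊ : ℕ) : ℝ) := by
      push_cast
      rw [← hm]
      exact mul_lt_mul_of_pos_left hrR (by exact_mod_cast hq0)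
    exact_mod_cast h1
  have main : ∀ k : ℕ, q * ⌈r⌉₊ ≤ k →
      Apoly q r c k =
          ∑ i ∈ Finset.Icc ⌈r⌉₊ (k / q),
            Polynomial.C ((-1 : ℝ) ^ k * genBinom r i *
                genBinom ((q : ℝ) * r - q * i) (k - q * i) * c ^ i) *
              Polynomial.X ^ (k - q * i) ∧
        (Apoly q r c k).degree = ((k - q * ⌈r⌉₊ : ℕ) : WithBot ℕ) ∧
        (Apoly q r c k).leadingCoeff =
          (-1 : ℝ) ^ k * genBinom r ⌈r⌉₊ *
            genBinom ((q : ℝ) * r - q * ⌈r⌉₊) (k - q * ⌈r⌉₊) * c ^ ⌈r⌉₊ ∧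
        (-1 : ℝ) ^ k * genBinom r ⌈r⌉₊ *
            genBinom ((q : ℝ) * r - q * ⌈r⌉₊) (k - q * ⌈r⌉₊) * c ^ ⌈r⌉₊ ≠ 0 := by
    intro k hk
    have hmk : m < k := lt_of_lt_of_le hmqR hk
    have hRdiv : ⌈r⌉₊ ≤ k / q := (Nat.le_div_iff_mul_le hq0).2 (by rwa [mul_comm])
    -- collapse
    have hcollapse : Apoly q r c k =
        ∑ i ∈ Finset.Icc ⌈r⌉₊ (k / q),
          Polynomial.C ((-1 : ℝ) ^ k * genBinom r i *
              genBinom ((q : ℝ) * r - q * i) (k - q * i) * c ^ i) *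
            Polynomial.X ^ (k - q * i) := by
      rw [Apoly]
      simp only [mul_sub]
      refine (Finset.sum_subset ?_ ?_).symm
      · intro i hi
        rw [Finset.mem_Icc] at hi
        rw [Finset.mem_range]
        omega
      · intro j hj hjn
        rw [Finset.mem_range] at hj
        rw [Finset.mem_Icc] at hjn
        have hjR : j < ⌈r⌉₊ := by omega
        have hjr : (j : ℝ) < r := Nat.lt_ceil.1 hjR
        have hqjm : q * j < m := by
          have h1 : ((q * j : ℕ) : ℝ) < (m : ℝ) := by
            push_cast
            rw [← hm]
            exact mul_lt_mul_of_pos_left hjr (by exact_mod_cast hq0)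
          exact_mod_cast h1
        have hcast : (q : ℝ) * r - (q : ℝ) * (j : ℝ) = ((m - q * j : ℕ) : ℝ) := by
          rw [hm]
          push_cast [Nat.cast_sub hqjm.le]
          ring
        rw [hcast, genBinom_nat_eq_zero (by omega)]
        simp
    have hdegle : (Apoly q r c k).degree ≤ ((k - q * ⌈r⌉₊ : ℕ) : WithBot ℕ) := by
      rw [hcollapse]
      refine le_trans (Polynomial.degree_sum_le _ _) ?_
      rw [Finset.sup_le_iff]
      intro i hi
      rw [Finset.mem_Icc] at hi
      refine le_trans (Polynomial.degree_C_mul_X_pow_le _ _) ?_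
      exact_mod_cast Nat.sub_le_sub_left (Nat.mul_le_mul_left q hi.1) k
    have hcoeff : (Apoly q r c k).coeff (k - q * ⌈r⌉₊) =
        (-1 : ℝ) ^ k * genBinom r ⌈r⌉₊ *
          genBinom ((q : ℝ) * r - q * ⌈r⌉₊) (k - q * ⌈r⌉₊) * c ^ ⌈r⌉₊ := by
      rw [hcollapse, Polynomial.finset_sum_coeff]
      rw [Finset.sum_eq_single ⌈r⌉₊]
      · rw [Polynomial.coeff_C_mul, Polynomial.coeff_X_pow, if_pos rfl, mul_one]
      · intro i hi hiR
        rw [Finset.mem_Icc] at hi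
        have hqi : q * i ≤ k := by
          have h := (Nat.le_div_iff_mul_le hq0).1 hi.2
          rwa [mul_comm] at h
        have hne : k - q * i ≠ k - q * ⌈r⌉₊ := by
          have h1 : q * ⌈r⌉₊ < q * i :=
            (Nat.mul_lt_mul_left hq0).2 (lt_of_le_of_ne hi.1 (Ne.symm hiR))
          omega
        rw [Polynomial.coeff_C_mul, Polynomial.coeff_X_pow, if_neg (fun h => hne h.symm), mul_zero]
      · intro h
        exact absurd (Finset.mem_Icc.2 ⟨le_rfl, hRdiv⟩) h
    have haR : (-1 : ℝ) ^ k * genBinom r ⌈r⌉₊ *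
        genBinom ((q : ℝ) * r - q * ⌈r⌉₊) (k - q * ⌈r⌉₊) * c ^ ⌈r⌉₊ ≠ 0 := by
      have hneg : (q : ℝ) * r - (q : ℝ) * (⌈r⌉₊ : ℝ) < 0 := by
        rw [hm]
        have h1 : (m : ℝ) < ((q * ⌈r⌉₊ : ℕ) : ℝ) := by exact_mod_cast hmqR
        push_cast at h1
        linarith
      refine mul_ne_zero (mul_ne_zero (mul_ne_zero ?_ ?_) ?_) ?_
      · exact pow_ne_zero _ (by norm_num)
      · exact genBinom_ne_zero fun t _ => hr t
      · refine genBinom_ne_zero fun t _ hEq => ?_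
        rw [hEq] at hneg
        exact absurd hneg (by positivity : (0:ℝ) ≤ (t:ℝ)).not_gt
      · exact pow_ne_zero _ hc.ne'
    have hdeg : (Apoly q r c k).degree = ((k - q * ⌈r⌉₊ : ℕ) : WithBot ℕ) :=
      Polynomial.degree_eq_of_le_of_coeff_ne_zero hdegle (by rw [hcoeff]; exact haR)
    refine ⟨hcollapse, hdeg, ?_, haR⟩
    rw [Polynomial.leadingCoeff, Polynomial.natDegree_eq_of_degree_eq_some hdeg, hcoeff]
  refine ⟨main, ?_, ?_⟩
  · apply aux_li
    intro n
    have := (main (n + q * ⌈r⌉₊) (Nat.le_add_left _ _)).2.1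
    rwa [Nat.add_sub_cancel] at this
  · apply aux_span
    intro n
    have := (main (n + q * ⌈r⌉₊) (Nat.le_add_left _ _)).2.1
    rwa [Nat.add_sub_cancel] at this
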